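/- Let K be a field of characteristic 0, d ≥ 2 an integer, and let θ_i = (i+u)(i+u+1), θ*_i = (i+u*)(i+u*+1), φ_i = i(i-d-1)(i+u+u*-v)(i+u+u*+d+1+v), and ϕ_i = i(i-d-1)(i-u+u*+v)(i-u+u*-d-1-v). Then condition PA3 holds: φ_i = ϕ_1·Σ_{j=0}^{i-1} (θ_j - θ_{d-j})/(θ_0 - θ_d) + (θ*_i - θ*_0)(θ_{i-1} - θ_d) for all 1 ≤ i ≤ d, provided θ_0 ≠ θ_d. -/

import Mathlib

lemma sum_aux {K : Type*} [Field K] (d : ℕ) : ∀ i : ℕ,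
    ∑ j ∈ Finset.range i, ((d : K) - 2 * (j : K)) = (i : K) * ((d : K) - (i : K) + 1) := by
  intro i
  induction i with
  | zero => simp
  | succ n ih =>
    rw [Finset.sum_range_succ, ih]
    push_cast
    ring

theorem stmt7 {K : Type*} [Field K] [CharZero K] (d : ℕ) (hd : 2 ≤ d) (u us v : K)
    (θ θs φ ϕ : ℕ → K)
    (hθ : ∀ i : ℕ, θ i = ((i : K) + u) * ((i : K) + u + 1))
    (hθs : ∀ i : ℕ, θs i = ((i : K) + us) * ((i : K) + us + 1))
    (hφ : ∀ i : ℕ, φ i = (i : K) * ((i : K) - (d : K) - 1) * ((i : K) + u + us - v)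
        * ((i : K) + u + us + (d : K) + 1 + v))
    (hϕ : ∀ i : ℕ, ϕ i = (i : K) * ((i : K) - (d : K) - 1) * ((i : K) - u + us + v)
        * ((i : K) - u + us - (d : K) - 1 - v))
    (h0d : θ 0 ≠ θ d) :
    ∀ i : ℕ, 1 ≤ i → i ≤ d →
      φ i = ϕ 1 * (∑ j ∈ Finset.range i, (θ j - θ (d - j)) / (θ 0 - θ d))
        + (θs i - θs 0) * (θ (i - 1) - θ d) := by
  have hd0 : (d : K) ≠ 0 := Nat.cast_ne_zero.mpr (by omega)
  have hC : θ 0 - θ d = -((d : K) * ((d : K) + 2 * u + 1)) := by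
    rw [hθ 0, hθ d]; push_cast; ring
  have hK : (d : K) + 2 * u + 1 ≠ 0 := by
    intro h
    exact sub_ne_zero.mpr h0d (by rw [hC, h]; ring)
  intro i h1 hi
  have hsum : ∑ j ∈ Finset.range i, (θ j - θ (d - j)) / (θ 0 - θ d)
      = (i : K) * ((d : K) - (i : K) + 1) / (d : K) := by
    have : ∀ j ∈ Finset.range i, (θ j - θ (d - j)) / (θ 0 - θ d)
        = ((d : K) - 2 * (j : K)) / (d : K) := by
      intro j hj
      have hjd : j ≤ d := le_trans (Nat.le_of_lt_succ (Nat.lt_succ_of_lt (Finset.mem_range.mp hj))) hi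
      have hcast : ((d - j : ℕ) : K) = (d : K) - (j : K) := by
        push_cast [Nat.cast_sub hjd]; ring
      rw [hθ j, hθ (d - j), hcast, hC]
      rw [div_eq_div_iff (neg_ne_zero.mpr (mul_ne_zero hd0 hK)) hd0]
      ring
    rw [Finset.sum_congr rfl this, ← Finset.sum_div, sum_aux]
  have hicast : ((i - 1 : ℕ) : K) = (i : K) - 1 := by
    push_cast [Nat.cast_sub h1]; ring
  rw [hsum, hφ, hϕ, hθs, hθs, hθ, hθ, hicast]
  push_cast
  field_simp
  ring
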